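/- Let n ∈ ℕ, S ⊆ ℝ compact with at least n+1 points and 0 ∉ S, and let R_n be the minimal residual polynomial for degree n on S, with all extremal points x₀ < ... < xₙ (from the alternation characterization) satisfying 0 ∉ [x₀, xₙ]. Then R_n has n simple real zeros ξ₁ < ... < ξₙ interlacing the extremal points: x₀ < ξ₁ < x₁ < ξ₂ < ... < ξₙ < xₙ. -/

import Mathlib

open Polynomial

noncomputable def supNorm (S : Set ℝ) (P : ℝ[X]) : ℝ := sSup ((fun x => |P.eval x|) '' S)

lemma roots_card_ge {R : ℝ[X]} (hR : R ≠ 0) {m : ℕ} (f : Fin m → ℝ)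
    (hf : Function.Injective f) (hroot : ∀ j, R.eval (f j) = 0) :
    m ≤ R.roots.card := by
  have hle : (Finset.univ.image f).val ≤ R.roots := by
    rw [Multiset.le_iff_subset (Finset.univ.image f).nodup]
    intro a ha
    simp only [Finset.mem_val, Finset.mem_image, Finset.mem_univ, true_and] at ha
    obtain ⟨j, rfl⟩ := ha
    rw [mem_roots hR]
    exact hroot j
  calc m = (Finset.univ.image f).card := by
        rw [Finset.card_image_of_injective _ hf, Finset.card_univ, Fintype.card_fin]
    _ ≤ R.roots.card := Multiset.card_le_card hle

theorem interlacing_zeros (n : ℕ) (S : Set ℝ) (hS : IsCompact S)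
    (h0 : (0 : ℝ) ∉ S) (hcard : (n + 1 : ℕ∞) ≤ S.encard)
    (R : ℝ[X]) (hdeg : R.degree ≤ n) (hR0 : R.eval 0 = 1)
    (hmin : ∀ Q : ℝ[X], Q.degree ≤ n → Q.eval 0 = 1 → supNorm S R ≤ supNorm S Q)
    (x : Fin (n + 1) → ℝ) (hmono : StrictMono x) (hxS : ∀ j, x j ∈ S)
    (hext : ∀ j, |R.eval (x j)| = supNorm S R)
    (halt : ∀ j : Fin n, R.eval (x j.castSucc) = -R.eval (x j.succ))
    (hgap : (0 : ℝ) ∉ Set.Icc (x 0) (x (Fin.last n))) :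
    ∃ ξ : Fin n → ℝ, StrictMono ξ ∧ (∀ j, R.eval (ξ j) = 0) ∧
      (∀ j : Fin n, x j.castSucc < ξ j ∧ ξ j < x j.succ) ∧
      R.roots.card = n ∧ R.roots.Nodup := by
  have hRne : R ≠ 0 := fun h => by simp [h] at hR0
  have hnatdeg : R.natDegree ≤ n := natDegree_le_iff_degree_le.mpr hdeg
  have hcardle : R.roots.card ≤ n := (R.card_roots' ).trans hnatdeg
  -- extremal values nonzero
  have hne : ∀ j, R.eval (x j) ≠ 0 := by
    intro j hj
    have hL : supNorm S R = 0 := by rw [← hext j, hj, abs_zero]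
    have hallzero : ∀ k, R.eval (x k) = 0 := by
      intro k
      have := hext k
      rw [hL, abs_eq_zero] at this
      exact this
    have := roots_card_ge hRne x hmono.injective hallzero
    omega
  -- zeros in each interval
  have hzero : ∀ j : Fin n, ∃ c, c ∈ Set.Ioo (x j.castSucc) (x j.succ) ∧ R.eval c = 0 := by
    intro j
    have hab : x j.castSucc < x j.succ := hmono (Fin.castSucc_lt_succ : j.castSucc < j.succ)
    have hcont : ContinuousOn (fun t => R.eval t) (Set.Icc (x j.castSucc) (x j.succ)) :=
      (Polynomial.continuous R).continuousOn
    rcases lt_or_gt_of_ne (hne j.castSucc) with hneg | hpos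
    · have hpos' : 0 < R.eval (x j.succ) := by
        have := halt j; nlinarith
      have := intermediate_value_Ioo hab.le hcont
      have h0mem : (0 : ℝ) ∈ Set.Ioo (R.eval (x j.castSucc)) (R.eval (x j.succ)) :=
        ⟨hneg, hpos'⟩
      obtain ⟨c, hc, hc0⟩ := this h0mem
      exact ⟨c, hc, hc0⟩
    · have hneg' : R.eval (x j.succ) < 0 := by
        have := halt j; nlinarith
      have := intermediate_value_Ioo' hab.le hcont
      have h0mem : (0 : ℝ) ∈ Set.Ioo (R.eval (x j.succ)) (R.eval (x j.castSucc)) :=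
        ⟨hneg', hpos⟩
      obtain ⟨c, hc, hc0⟩ := this h0mem
      exact ⟨c, hc, hc0⟩
  choose ξ hmem hval using hzero
  have hlt1 : ∀ j : Fin n, x j.castSucc < ξ j := fun j => (hmem j).1
  have hlt2 : ∀ j : Fin n, ξ j < x j.succ := fun j => (hmem j).2
  have hsm : StrictMono ξ := by
    intro i j hij
    have h1 : (i.succ : Fin (n+1)) ≤ j.castSucc := by
      rw [Fin.succ_le_castSucc_iff]; exact hij
    calc ξ i < x i.succ := hlt2 i
      _ ≤ x j.castSucc := hmono.monotone h1
      _ < ξ j := hlt1 j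
  have hge := roots_card_ge hRne ξ hsm.injective hval
  refine ⟨ξ, hsm, hval, fun j => ⟨hlt1 j, hlt2 j⟩, le_antisymm hcardle hge, ?_⟩
  -- nodup: roots equals the image multiset
  have hle : (Finset.univ.image ξ).val ≤ R.roots := by
    rw [Multiset.le_iff_subset (Finset.univ.image ξ).nodup]
    intro a ha
    simp only [Finset.mem_val, Finset.mem_image, Finset.mem_univ, true_and] at ha
    obtain ⟨j, rfl⟩ := ha
    rw [mem_roots hRne]
    exact hval j
  have hcardeq : R.roots.card ≤ (Finset.univ.image ξ).val.card := by
    rw [Finset.card_val, Finset.card_image_of_injective _ hsm.injective]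
    simpa using hcardle
  have := Multiset.eq_of_le_of_card_le hle hcardeq
  rw [← this]
  exact (Finset.univ.image ξ).nodup
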